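/- For all nonnegative integers n, r and real α, B^L_{n,r}(α) = Σ_{l=0}^{n} ( Σ_{k=l}^{n} L_r(n,k) s(k,l) ) B_l(α), where s(k,l) are the signed Stirling numbers of the first kind and B_l the Bell polynomials. -/

import Mathlib

open Finset

/-- The `r`-Lah numbers `L_r(n,k) = (n!/k!) * C(n+2r-1, k+2r-1)` for `k ≤ n`, and `0` otherwise. -/
def rLah (r n k : ℕ) : ℕ :=
  if k ≤ n then n.factorial / k.factorial * Nat.choose (n + 2 * r - 1) (n - k) else 0

/-- Stirling numbers of the second kind. -/
def stirling2 : ℕ → ℕ → ℕ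
  | 0, 0 => 1
  | 0, _ + 1 => 0
  | _ + 1, 0 => 0
  | n + 1, k + 1 => (k + 1) * stirling2 n (k + 1) + stirling2 n k

/-- Signed Stirling numbers of the first kind, satisfying `(x)_n = Σ_k s(n,k) x^k`. -/
def stirling1 : ℕ → ℕ → ℤ
  | 0, 0 => 1
  | 0, _ + 1 => 0
  | _ + 1, 0 => 0
  | n + 1, k + 1 => stirling1 n k - (n : ℤ) * stirling1 n (k + 1)

/-- Bell numbers. -/
def bell (n : ℕ) : ℕ := ∑ k ∈ Finset.range (n + 1), stirling2 n k

/-- The `r`-extended Bell numbers `B_{n,r} = Σ_k C(n,k) r^(n-k) B_k`. -/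
def bellExt (n r : ℕ) : ℕ :=
  ∑ k ∈ Finset.range (n + 1), Nat.choose n k * r ^ (n - k) * bell k

/-- The `r`-extended Lah-Bell numbers `B^L_{n,r} = Σ_{k=0}^n L_r(n,k)`. -/
def lahBellExt (n r : ℕ) : ℕ := ∑ k ∈ Finset.range (n + 1), rLah r n k

/-- Stirling polynomials of the second kind `S₂(n,k|x) = Σ_j C(n,j) x^(n-j) S₂(j,k)`,
evaluated at a natural number `x`. -/
def stirling2Poly (n k x : ℕ) : ℕ :=
  ∑ j ∈ Finset.Icc k n, Nat.choose n j * x ^ (n - j) * stirling2 j k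

lemma stirling1_eq_zero : ∀ n k, n < k → stirling1 n k = 0
  | 0, _+1, _ => rfl
  | n+1, k+1, h => by
    have h1 : n < k := by omega
    have h2 : n < k+1 := by omega
    simp [stirling1, stirling1_eq_zero n k h1, stirling1_eq_zero n (k+1) h2]

lemma stirling2_eq_zero : ∀ n k, n < k → stirling2 n k = 0
  | 0, _+1, _ => rfl
  | n+1, k+1, h => by
    have h1 : n < k := by omega
    have h2 : n < k+1 := by omega
    simp [stirling2, stirling2_eq_zero n k h1, stirling2_eq_zero n (k+1) h2]

lemma shift_sum (k j : ℕ) :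
    ∑ m ∈ range (k+1), stirling1 k (m+1) * (stirling2 (m+1) (j+1) : ℤ)
      = ∑ l ∈ range (k+1), stirling1 k l * (stirling2 l (j+1) : ℤ) := by
  have h := Finset.sum_range_succ' (fun l => stirling1 k l * (stirling2 l (j+1) : ℤ)) (k+1)
  have h2 := Finset.sum_range_succ (fun l => stirling1 k l * (stirling2 l (j+1) : ℤ)) (k+1)
  simp only [stirling2, Nat.cast_zero, mul_zero, add_zero] at h
  rw [h2, stirling1_eq_zero k (k+1) (by omega)] at h
  simpa [stirling2] using h.symm

lemma stirling_inv : ∀ (k j : ℕ),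
    (∑ l ∈ range (k+1), stirling1 k l * (stirling2 l j : ℤ)) =
      if k = j then 1 else 0
  | 0, 0 => by simp [stirling1, stirling2]
  | 0, j+1 => by simp [stirling1, stirling2]
  | k+1, 0 => by
      rw [Finset.sum_range_succ']
      simp [stirling1, stirling2]
  | k+1, j+1 => by
      have h1 := stirling_inv k j
      have h2 := stirling_inv k (j+1)
      rw [Finset.sum_range_succ']
      have e : ∀ m ∈ range (k+1), stirling1 (k+1) (m+1) * (stirling2 (m+1) (j+1) : ℤ)
          = ((stirling1 k m * stirling2 m (j+1)) * (j+1)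
            + stirling1 k m * stirling2 m j)
            - (k : ℤ) * (stirling1 k (m+1) * stirling2 (m+1) (j+1)) := by
        intro m _
        simp only [stirling1, stirling2]
        push_cast
        ring
      rw [Finset.sum_congr rfl e, Finset.sum_sub_distrib, Finset.sum_add_distrib,
        ← Finset.sum_mul, ← Finset.mul_sum, shift_sum, h1, h2]
      have t0 : stirling1 (k+1) 0 = 0 := rfl
      have s0 : (stirling2 0 (j+1) : ℤ) = 0 := by simp [stirling2]
      rw [t0, s0]
      split_ifs <;> push_cast <;> omega

lemma bell_inv (k : ℕ) (α : ℝ) :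
    ∑ l ∈ range (k+1), (stirling1 k l : ℝ) *
      (∑ j ∈ range (l+1), (stirling2 l j : ℝ) * α ^ j) = α ^ k := by
  have ext1 : ∀ l ∈ range (k+1),
      (stirling1 k l : ℝ) * (∑ j ∈ range (l+1), (stirling2 l j : ℝ) * α ^ j)
        = ∑ j ∈ range (k+1), (stirling1 k l : ℝ) * ((stirling2 l j : ℝ) * α ^ j) := by
    intro l hl
    rw [Finset.mul_sum]
    apply Finset.sum_subset
    · intro j hj; simp only [Finset.mem_range] at *; omega
    · intro j hj hj2
      simp only [Finset.mem_range] at hj hj2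
      rw [stirling2_eq_zero l j (by omega)]
      simp
  rw [Finset.sum_congr rfl ext1, Finset.sum_comm]
  have ext2 : ∀ j ∈ range (k+1),
      ∑ l ∈ range (k+1), (stirling1 k l : ℝ) * ((stirling2 l j : ℝ) * α ^ j)
        = (if k = j then (1:ℝ) else 0) * α ^ j := by
    intro j _
    have h := stirling_inv k j
    calc ∑ l ∈ range (k+1), (stirling1 k l : ℝ) * ((stirling2 l j : ℝ) * α ^ j)
        = ((∑ l ∈ range (k+1), stirling1 k l * (stirling2 l j : ℤ) : ℤ) : ℝ) * α ^ j := by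
          push_cast
          rw [Finset.sum_mul]
          exact Finset.sum_congr rfl fun l _ => by ring
      _ = (if k = j then (1:ℝ) else 0) * α ^ j := by
          rw [h]; split_ifs <;> push_cast <;> ring
  rw [Finset.sum_congr rfl ext2]
  simp

/-- `B^L_{n,r}(α) = Σ_{l=0}^n (Σ_{k=l}^n L_r(n,k) s(k,l)) B_l(α)`, where `s(k,l)` are the
signed Stirling numbers of the first kind and `B_l` the Bell polynomials. -/
theorem lahBellExt_poly_eq_sum_bellPoly (n r : ℕ) (α : ℝ) :
    ∑ k ∈ Finset.range (n + 1), (rLah r n k : ℝ) * α ^ k =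
      ∑ l ∈ Finset.range (n + 1),
        (∑ k ∈ Finset.Icc l n, (rLah r n k : ℝ) * (stirling1 k l : ℝ)) *
          (∑ j ∈ Finset.range (l + 1), (stirling2 l j : ℝ) * α ^ j) := by
  symm
  set B : ℕ → ℝ := fun l => ∑ j ∈ Finset.range (l + 1), (stirling2 l j : ℝ) * α ^ j with hB
  calc ∑ l ∈ range (n+1), (∑ k ∈ Icc l n, (rLah r n k : ℝ) * (stirling1 k l : ℝ)) * B l
      = ∑ l ∈ range (n+1), ∑ k ∈ range (n+1),
          (if l ≤ k then ((rLah r n k : ℝ) * (stirling1 k l : ℝ)) * B l else 0) := by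
        refine Finset.sum_congr rfl fun l hl => ?_
        rw [Finset.sum_mul, ← Finset.sum_filter]
        congr 1
        ext k
        simp only [Finset.mem_Icc, Finset.mem_filter, Finset.mem_range]
        omega
    _ = ∑ k ∈ range (n+1), ∑ l ∈ range (n+1),
          (if l ≤ k then ((rLah r n k : ℝ) * (stirling1 k l : ℝ)) * B l else 0) :=
        Finset.sum_comm
    _ = ∑ k ∈ range (n+1), ∑ l ∈ range (k+1),
          ((rLah r n k : ℝ) * (stirling1 k l : ℝ)) * B l := by
        refine Finset.sum_congr rfl fun k hk => ?_
        simp only [Finset.mem_range] at hk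
        rw [← Finset.sum_filter]
        congr 1
        ext l
        simp only [Finset.mem_filter, Finset.mem_range]
        omega
    _ = ∑ k ∈ range (n+1), (rLah r n k : ℝ) * α ^ k := by
        refine Finset.sum_congr rfl fun k hk => ?_
        have : ∀ l ∈ range (k+1),
            ((rLah r n k : ℝ) * (stirling1 k l : ℝ)) * B l
              = (rLah r n k : ℝ) * ((stirling1 k l : ℝ) * B l) :=
          fun l _ => mul_assoc _ _ _
        rw [Finset.sum_congr rfl this, ← Finset.mul_sum, hB]
        rw [bell_inv k α]
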